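/- For infinite cardinals κ ≤ λ with λ regular, cf⟨^λκ, ≤⟩ equals the maximum of cf⟨^λκ, ≤*⟩ and the supremum over α < λ of cf⟨^ακ, ≤⟩ (i.e., the product/sum expression cf⟨^λκ,≤*⟩ · Σ_{α<λ} cf⟨^ακ,≤⟩ as cardinals). -/

import Mathlib

open Cardinal Order

/-- The cofinality of the everywhere (pointwise) domination order on functions `X → K`. -/
noncomputable def everyCof (X K : Type*) [LE K] : Cardinal :=
  sInf {c | ∃ D : Set (X → K), #D = c ∧ ∀ f : X → K, ∃ g ∈ D, ∀ x, f x ≤ g x}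

/-- The cofinality of the eventual domination order on functions `X → K`. -/
noncomputable def evenCof (X K : Type*) [LE X] [LE K] : Cardinal :=
  sInf {c | ∃ D : Set (X → K), #D = c ∧
    ∀ f : X → K, ∃ g ∈ D, ∃ a : X, ∀ b : X, a ≤ b → f b ≤ g b}

open Ordinal

lemma everyCof_spec (X K : Type u) [LinearOrder K] :
    ∃ D : Set (X → K), #D = everyCof X K ∧ ∀ f : X → K, ∃ g ∈ D, ∀ x, f x ≤ g x := by
  have h : everyCof X K ∈ {c | ∃ D : Set (X → K), #D = c ∧ ∀ f : X → K, ∃ g ∈ D, ∀ x, f x ≤ g x} :=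
    csInf_mem ⟨#(Set.univ : Set (X → K)), Set.univ, rfl,
      fun f => ⟨f, Set.mem_univ f, fun x => le_rfl⟩⟩
  obtain ⟨D, hD, hdom⟩ := h
  exact ⟨D, hD, hdom⟩

lemma evenCof_spec (X K : Type u) [LE X] [Nonempty X] [LinearOrder K] :
    ∃ D : Set (X → K), #D = evenCof X K ∧
      ∀ f : X → K, ∃ g ∈ D, ∃ a : X, ∀ b : X, a ≤ b → f b ≤ g b := by
  have h : evenCof X K ∈ {c | ∃ D : Set (X → K), #D = c ∧
      ∀ f : X → K, ∃ g ∈ D, ∃ a : X, ∀ b : X, a ≤ b → f b ≤ g b} :=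
    csInf_mem ⟨#(Set.univ : Set (X → K)), Set.univ, rfl,
      fun f => ⟨f, Set.mem_univ f, Classical.arbitrary X, fun b _ => le_rfl⟩⟩
  obtain ⟨D, hD, hdom⟩ := h
  exact ⟨D, hD, hdom⟩

lemma everyCof_le {X K : Type u} [LE K] {D : Set (X → K)}
    (hdom : ∀ f : X → K, ∃ g ∈ D, ∀ x, f x ≤ g x) : everyCof X K ≤ #D :=
  csInf_le' ⟨D, rfl, hdom⟩

lemma evenCof_le {X K : Type u} [LE X] [LE K] {D : Set (X → K)}
    (hdom : ∀ f : X → K, ∃ g ∈ D, ∃ a : X, ∀ b : X, a ≤ b → f b ≤ g b) : evenCof X K ≤ #D :=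
  csInf_le' ⟨D, rfl, hdom⟩

lemma everyCof_mono {X Y K : Type u} [LinearOrder K] [Nonempty K] (e : X ↪ Y) :
    everyCof X K ≤ everyCof Y K := by
  obtain ⟨D, hD, hdom⟩ := everyCof_spec Y K
  have h : ∀ f : X → K, ∃ g ∈ ((fun g => g ∘ e) '' D), ∀ x, f x ≤ g x := by
    intro f
    classical
    set F : Y → K := fun y => if h : ∃ x, e x = y then f h.choose else Classical.arbitrary K with hF
    obtain ⟨g, hg, hgd⟩ := hdom F
    refine ⟨g ∘ e, ⟨g, hg, rfl⟩, fun x => ?_⟩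
    have hex : ∃ x', e x' = e x := ⟨x, rfl⟩
    have : F (e x) = f x := by
      rw [hF]; simp only [dif_pos hex]
      exact congrArg f (e.injective hex.choose_spec)
    calc f x = F (e x) := this.symm
      _ ≤ g (e x) := hgd (e x)
  calc everyCof X K ≤ #((fun g => g ∘ e) '' D) := everyCof_le h
    _ ≤ #D := mk_image_le
    _ = everyCof Y K := hD

-- the hard lower bound: l ≤ evenCof
lemma le_evenCof (k l : Cardinal.{u}) (hk : ℵ₀ ≤ k) (hkl : k ≤ l) (hreg : l.IsRegular) :
    l ≤ evenCof l.ord.ToType k.ord.ToType := by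
  have hl : ℵ₀ ≤ l := hk.trans hkl
  have hlne : l.ord ≠ 0 := by
    rw [Ne, Cardinal.ord_eq_zero]
    exact (aleph0_pos.trans_le hl).ne'
  have hkne : k.ord ≠ 0 := by
    rw [Ne, Cardinal.ord_eq_zero]
    exact (aleph0_pos.trans_le hk).ne'
  haveI : Nonempty l.ord.ToType := toType_nonempty_iff_ne_zero.2 hlne
  haveI : Nonempty k.ord.ToType := toType_nonempty_iff_ne_zero.2 hkne
  haveI : NoMaxOrder k.ord.ToType := Cardinal.noMaxOrder hk
  have hmkl : #l.ord.ToType = l := by rw [mk_toType, card_ord]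
  refine le_csInf ⟨#(Set.univ : Set (l.ord.ToType → k.ord.ToType)), Set.univ, rfl,
    fun f => ⟨f, Set.mem_univ f, Classical.arbitrary _, fun b _ => le_rfl⟩⟩ ?_
  rintro c ⟨D, rfl, hdom⟩
  by_contra hcl
  push_neg at hcl
  -- D is nonempty
  obtain ⟨g0, hg0, -⟩ := hdom (fun _ => Classical.arbitrary _)
  haveI : Nonempty D := ⟨⟨g0, hg0⟩⟩
  -- build an equiv
  have hcard : #(D × l.ord.ToType) = #(l.ord.ToType) := by
    rw [mk_prod, Cardinal.lift_id, Cardinal.lift_id, hmkl]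
    exact mul_eq_right hl hcl.le (mk_ne_zero _)
  obtain ⟨e⟩ := Cardinal.eq.1 hcard
  set π : l.ord.ToType → D := fun b => (e.symm b).1 with hπ
  set f : l.ord.ToType → k.ord.ToType := fun b => (exists_gt ((π b).1 b)).choose with hf
  have hflt : ∀ b, (π b).1 b < f b := fun b => (exists_gt ((π b).1 b)).choose_spec
  obtain ⟨g, hg, a, ha⟩ := hdom f
  -- find b ≥ a in the fiber of g
  set F : l.ord.ToType → l.ord.ToType := fun x => e (⟨g, hg⟩, x) with hF
  have hπF : ∀ x, π (F x) = ⟨g, hg⟩ := fun x => by simp [hπ, hF]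
  have : ∃ x, ¬ F x < a := by
    by_contra hall
    push_neg at hall
    have hinj : Function.Injective (fun x => (⟨F x, hall x⟩ : {y : l.ord.ToType // y < a})) := by
      intro x y hxy
      have := congrArg Subtype.val hxy
      simp only [hF] at this
      exact (Prod.mk.injEq _ _ _ _ ▸ e.injective this).2
    have h1 : l ≤ #{y : l.ord.ToType // y < a} := by
      exact le_trans hmkl.ge (mk_le_of_injective hinj)
    have h2 : #{y : l.ord.ToType // y < a} < l := by
      have h3 := lt_ord.1 (typein_lt_self a)
      exact h3
    exact absurd h1 h2.not_ge
  obtain ⟨x, hx⟩ := this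
  have hab : a ≤ F x := not_lt.1 hx
  have h1 : f (F x) ≤ g (F x) := ha (F x) hab
  have h2 : g (F x) < f (F x) := by
    have := hflt (F x)
    rwa [hπF x] at this
  exact absurd h1 h2.not_ge

theorem stmt_6 (k l : Cardinal) (hk : ℵ₀ ≤ k) (hkl : k ≤ l) (hreg : l.IsRegular) :
    everyCof l.ord.ToType k.ord.ToType =
      max (evenCof l.ord.ToType k.ord.ToType)
        (⨆ a : Set.Iio l.ord, everyCof (a : Ordinal).ToType k.ord.ToType) := by
  have hl : ℵ₀ ≤ l := hk.trans hkl
  have hlne : l.ord ≠ 0 := by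
    rw [Ne, Cardinal.ord_eq_zero]; exact (aleph0_pos.trans_le hl).ne'
  have hkne : k.ord ≠ 0 := by
    rw [Ne, Cardinal.ord_eq_zero]; exact (aleph0_pos.trans_le hk).ne'
  haveI : Nonempty l.ord.ToType := toType_nonempty_iff_ne_zero.2 hlne
  haveI : Nonempty k.ord.ToType := toType_nonempty_iff_ne_zero.2 hkne
  letI : IsWellOrder l.ord.ToType (· < ·) := isWellOrder_lt
  have hlim : Order.IsSuccLimit l.ord := Cardinal.isSuccLimit_ord hl
  have hmkl : #l.ord.ToType = l := by rw [mk_toType, card_ord]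
  set s : Cardinal := ⨆ a : Set.Iio l.ord, everyCof (a : Ordinal).ToType k.ord.ToType with hs
  set ec : Cardinal := evenCof l.ord.ToType k.ord.ToType with hec
  have hlec : l ≤ ec := le_evenCof k l hk hkl hreg
  have hM : ℵ₀ ≤ max ec s := hl.trans (hlec.trans (le_max_left _ _))
  refine le_antisymm ?_ (max_le ?_ ?_)
  · -- main direction
    obtain ⟨Ds, hDs, hdoms⟩ := evenCof_spec l.ord.ToType k.ord.ToType
    set A : l.ord.ToType → Set.Iio l.ord := fun a0 =>
      ⟨typein (α := l.ord.ToType) (· < ·) a0 + 1, by rw [Ordinal.add_one_eq_succ]; exact hlim.succ_lt (typein_lt_self a0)⟩ with hA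
    choose Dc hDc hdomc using fun a0 : l.ord.ToType =>
      everyCof_spec ((A a0 : Ordinal).ToType) k.ord.ToType
    classical
    set ext : ∀ a0 : l.ord.ToType, (((A a0 : Ordinal)).ToType → k.ord.ToType) →
        l.ord.ToType → k.ord.ToType := fun a0 h x =>
      if hx : typein (α := l.ord.ToType) (· < ·) x < (A a0 : Ordinal) then
        h (Ordinal.ToType.mk (o := _) ⟨typein (α := l.ord.ToType) (· < ·) x, hx⟩)
      else Classical.arbitrary _ with hext
    set Fam : ∀ a0 : l.ord.ToType, (Ds × (Dc a0)) → (l.ord.ToType → k.ord.ToType) :=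
      fun a0 p => fun x => max (p.1.1 x) (ext a0 p.2.1 x) with hFam
    set S : Set (l.ord.ToType → k.ord.ToType) := ⋃ a0 : l.ord.ToType, Set.range (Fam a0) with hS
    have hdomS : ∀ f : l.ord.ToType → k.ord.ToType, ∃ g ∈ S, ∀ x, f x ≤ g x := by
      intro f
      obtain ⟨g, hg, a0, ha⟩ := hdoms f
      letI : IsWellOrder ((A a0 : Ordinal)).ToType (· < ·) := isWellOrder_lt
      set f' : ((A a0 : Ordinal)).ToType → k.ord.ToType := fun y =>
        f (Ordinal.enum (α := l.ord.ToType) (· < ·) ⟨((Ordinal.ToType.mk (o := (A a0 : Ordinal))).symm y : Ordinal),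
          by rw [type_toType]; exact lt_trans (Set.mem_Iio.1 ((Ordinal.ToType.mk (o := _)).symm y).2) (Set.mem_Iio.1 (A a0).2)⟩) with hf'
      obtain ⟨h, hh, hhd⟩ := hdomc a0 f'
      refine ⟨Fam a0 (⟨g, hg⟩, ⟨h, hh⟩), Set.mem_iUnion.2 ⟨a0, Set.mem_range_self _⟩, ?_⟩
      intro x
      by_cases hx : typein (α := l.ord.ToType) (· < ·) x < (A a0 : Ordinal)
      · have he : ext a0 h x = h (Ordinal.ToType.mk (o := _)
            ⟨typein (α := l.ord.ToType) (· < ·) x, hx⟩) := dif_pos hx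
        have key : f' (Ordinal.ToType.mk (o := (A a0 : Ordinal))
            ⟨typein (α := l.ord.ToType) (· < ·) x, hx⟩) = f x := by
          rw [hf']
          have hsymm : (Ordinal.ToType.mk (o := (A a0 : Ordinal))).symm (Ordinal.ToType.mk (o := (A a0 : Ordinal))
              ⟨typein (α := l.ord.ToType) (· < ·) x, hx⟩)
              = ⟨typein (α := l.ord.ToType) (· < ·) x, hx⟩ :=
            OrderIso.symm_apply_apply _ _
          have hval : ((Ordinal.ToType.mk (o := (A a0 : Ordinal))).symm (Ordinal.ToType.mk (o := (A a0 : Ordinal))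
              ⟨typein (α := l.ord.ToType) (· < ·) x, hx⟩) : Ordinal)
              = typein (α := l.ord.ToType) (· < ·) x := congrArg Subtype.val hsymm
          simp_rw [hval]
          exact congrArg f (enum_typein (α := l.ord.ToType) (· < ·) x)
        calc f x = f' _ := key.symm
          _ ≤ h _ := hhd _
          _ = ext a0 h x := he.symm
          _ ≤ Fam a0 (⟨g, hg⟩, ⟨h, hh⟩) x := le_max_right _ _
      · have hax : a0 ≤ x := by
          have h1 : typein (α := l.ord.ToType) (· < ·) a0
              < typein (α := l.ord.ToType) (· < ·) x := by
            refine lt_of_lt_of_le ?_ (not_lt.1 hx)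
            have h0 : (A a0 : Ordinal) = typein (α := l.ord.ToType) (· < ·) a0 + 1 := rfl
            rw [h0, Ordinal.add_one_eq_succ]
            exact Order.lt_succ _
          exact (typein_lt_typein _ |>.1 h1).le
        calc f x ≤ g x := ha x hax
          _ ≤ Fam a0 (⟨g, hg⟩, ⟨h, hh⟩) x := le_max_left _ _
    refine le_trans (everyCof_le hdomS) ?_
    have hbdd : BddAbove (Set.range fun a : Set.Iio l.ord =>
        everyCof (a : Ordinal).ToType k.ord.ToType) := Cardinal.bddAbove_range _
    have hstep : ∀ a0 : l.ord.ToType, #(Set.range (Fam a0)) ≤ max ec s := by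
      intro a0
      refine le_trans mk_range_le ?_
      rw [mk_prod, Cardinal.lift_id, Cardinal.lift_id, hDs, hDc a0]
      have h1 : ec ≤ max ec s := le_max_left _ _
      have h2 : everyCof ((A a0 : Ordinal)).ToType k.ord.ToType ≤ s := le_ciSup hbdd (A a0)
      calc ec * everyCof ((A a0 : Ordinal)).ToType k.ord.ToType
          ≤ max ec s * max ec s := mul_le_mul' h1 (h2.trans (le_max_right _ _))
        _ = max ec s := mul_eq_self hM
    calc #S ≤ #(l.ord.ToType) * ⨆ a0, #(Set.range (Fam a0)) := mk_iUnion_le _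
      _ ≤ #(l.ord.ToType) * max ec s := by
          refine mul_le_mul_right (ciSup_le' hstep) _
      _ = l * max ec s := by rw [hmkl]
      _ = max ec s := mul_eq_right hM (hlec.trans (le_max_left _ _))
          (fun h0 => (aleph0_pos.trans_le hl).ne' h0)
  · -- evenCof ≤ everyCof
    obtain ⟨D, hD, hdom⟩ := everyCof_spec l.ord.ToType k.ord.ToType
    refine le_trans (evenCof_le ?_) hD.le
    intro f
    obtain ⟨g, hg, hgd⟩ := hdom f
    exact ⟨g, hg, Classical.arbitrary _, fun b _ => hgd b⟩
  · -- sup ≤ everyCof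
    refine ciSup_le' fun a => ?_
    exact everyCof_mono (Ordinal.principalSegToType a.2).toRelEmbedding.toEmbedding
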